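/- Let (Ω, d, ∫, ρ) be a k-cycle over a complex algebra A. Then the (k+1)-linear functional τ(a^0,…,a^k) = ∫ ρ(a^0) d(ρ(a^1)) ⋯ d(ρ(a^k)) is a cyclic k-cocycle on A: it satisfies τ(a^k, a^0,…,a^{k-1}) = (−1)^k τ(a^0,…,a^k), and bτ = 0, where (bτ)(a^0,…,a^{k+1}) = Σ_{j=0}^{k} (−1)^j τ(a^0,…,a^j a^{j+1},…,a^{k+1}) + (−1)^{k+1} τ(a^{k+1} a^0, a^1,…,a^k). -/

import Mathlib

open scoped BigOperators

namespace CyclicCohomology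

/-- A `k`-cycle `(Ω, d, ∫, ρ)` over a complex algebra `A`: a graded complex
algebra `Ω = Ω⁰ ⊕ ⋯ ⊕ Ωᵏ` (realized by submodules `G j` of an ambient algebra,
with `G j = 0` for `j > k`, so that products of total degree `> k` vanish),
a degree-one differential `d` with `d² = 0` satisfying the graded Leibniz rule,
a closed graded trace `∫ : Ωᵏ → ℂ`, and an algebra homomorphism `ρ : A → Ω⁰`. -/
structure CycleOver (k : ℕ) (A : Type*) [Ring A] [Algebra ℂ A]
    (Ω : Type*) [Ring Ω] [Algebra ℂ Ω] : Type _ where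
  /-- the grading `G j = Ω^j` -/
  G : ℕ → Submodule ℂ Ω
  top_eq_bot : ∀ j : ℕ, k < j → G j = ⊥
  mul_mem : ∀ {j j' : ℕ} {x y : Ω}, x ∈ G j → y ∈ G j' → x * y ∈ G (j + j')
  /-- the differential -/
  d : Ω →ₗ[ℂ] Ω
  d_mem : ∀ {j : ℕ} {x : Ω}, x ∈ G j → d x ∈ G (j + 1)
  d_sq : ∀ x : Ω, d (d x) = 0
  leibniz : ∀ {j : ℕ} {x : Ω}, x ∈ G j → ∀ y : Ω,
    d (x * y) = d x * y + ((-1 : ℂ) ^ j) • (x * d y)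
  /-- the graded trace `∫` (only its values on `Ωᵏ` matter) -/
  intg : Ω →ₗ[ℂ] ℂ
  trace : ∀ {j : ℕ} {x y : Ω}, j ≤ k → x ∈ G j → y ∈ G (k - j) →
    intg (x * y) = ((-1 : ℂ) ^ (j * (k - j))) * intg (y * x)
  closed : ∀ {x : Ω}, x ∈ G (k - 1) → intg (d x) = 0
  /-- the homomorphism `ρ : A → Ω⁰` -/
  ρ : A →ₗ[ℂ] Ω
  ρ_mul : ∀ a b : A, ρ (a * b) = ρ a * ρ b
  ρ_mem : ∀ a : A, ρ a ∈ G 0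

noncomputable section

variable {A Ω : Type*} [Ring A] [Algebra ℂ A] [Ring Ω] [Algebra ℂ Ω] {k : ℕ}

/-- The Connes character of a cycle:
`τ(a⁰,…,aᵏ) = ∫ ρ(a⁰) d(ρ(a¹)) ⋯ d(ρ(aᵏ))`. -/
def CycleOver.char (C : CycleOver k A Ω) (a : Fin (k + 1) → A) : ℂ :=
  C.intg (C.ρ (a 0) * (List.ofFn fun i : Fin k => C.d (C.ρ (a i.succ))).prod)

section PdAux

variable {M : Type*} [Monoid M]

/-- ordered product `F m * F (m+1) * ⋯ * F (m+n-1)` -/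
def Pd (F : ℕ → M) : ℕ → ℕ → M
  | _, 0 => 1
  | m, n+1 => F m * Pd F (m+1) n

@[simp] lemma Pd_zero (F : ℕ → M) (m : ℕ) : Pd F m 0 = 1 := rfl

lemma Pd_succ (F : ℕ → M) (m n : ℕ) : Pd F m (n+1) = F m * Pd F (m+1) n := rfl

lemma Pd_succ_right (F : ℕ → M) : ∀ (n m : ℕ), Pd F m (n+1) = Pd F m n * F (m+n)
  | 0, m => by simp [Pd_succ]
  | n+1, m => by
    rw [Pd_succ, Pd_succ_right F n (m+1), Pd_succ F m n, mul_assoc]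
    exact congrArg (fun t => F m * (Pd F (m+1) n * F t)) (by omega)

lemma Pd_add (F : ℕ → M) (m p : ℕ) : ∀ q, Pd F m (p + q) = Pd F m p * Pd F (m+p) q
  | 0 => by simp
  | q+1 => by
    have h1 : p + (q+1) = (p+q) + 1 := by omega
    rw [h1, Pd_succ_right, Pd_add F m p q, Pd_succ_right, mul_assoc]
    exact congrArg (fun t => Pd F m p * (Pd F (m+p) q * F t)) (by omega)

lemma Pd_congr (F F' : ℕ → M) : ∀ (n m m' : ℕ), (∀ i, i < n → F (m+i) = F' (m'+i)) →
    Pd F m n = Pd F' m' n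
  | 0, _, _, _ => rfl
  | n+1, m, m', h => by
    rw [Pd_succ, Pd_succ]
    refine congrArg₂ (· * ·) (by simpa using h 0 (by omega)) ?_
    refine Pd_congr F F' n (m+1) (m'+1) (fun i hi => ?_)
    have := h (i+1) (by omega)
    calc F (m+1+i) = F (m+(i+1)) := congrArg F (by omega)
      _ = F' (m'+(i+1)) := this
      _ = F' (m'+1+i) := congrArg F' (by omega)

lemma ofFn_prod_eq_Pd : ∀ (n : ℕ) (H : Fin n → M) (F : ℕ → M) (m : ℕ),
    (∀ i : Fin n, H i = F (m + (i : ℕ))) → (List.ofFn H).prod = Pd F m n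
  | 0, _, _, _, _ => by simp
  | n+1, H, F, m, h => by
    rw [List.ofFn_succ, List.prod_cons, Pd_succ]
    refine congrArg₂ (· * ·) (by simpa using h 0) ?_
    refine ofFn_prod_eq_Pd n (fun i => H i.succ) F (m+1) (fun i => ?_)
    show H i.succ = _
    rw [h i.succ]
    exact congrArg F (by simp [Fin.val_succ]; omega)

end PdAux




lemma CycleOver.leibniz0 (C : CycleOver k A Ω) {x : Ω} (hx : x ∈ C.G 0) (y : Ω) :
    C.d (x * y) = C.d x * y + x * C.d y := by
  simpa using C.leibniz hx y

lemma CycleOver.mul_Pd_mem (C : CycleOver k A Ω) (F : ℕ → Ω) (hF : ∀ i, F i ∈ C.G 1) :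
    ∀ (n : ℕ) {j : ℕ} {x : Ω} (_ : x ∈ C.G j) (m : ℕ), x * Pd F m n ∈ C.G (j + n)
  | 0, j, x, hx, m => by simpa using hx
  | n+1, j, x, hx, m => by
    have h1 : x * Pd F m (n+1) = (x * F m) * Pd F (m+1) n := by
      rw [Pd_succ, mul_assoc]
    have h2 := C.mul_Pd_mem F hF n (C.mul_mem hx (hF m)) (m+1)
    rw [h1]
    have h3 : j + 1 + n = j + (n+1) := by omega
    exact h3 ▸ h2

lemma CycleOver.Pd_mem' (C : CycleOver k A Ω) (F : ℕ → Ω) (hF : ∀ i, F i ∈ C.G 1)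
    {x : A} (n m : ℕ) : C.ρ x * Pd F m n ∈ C.G n := by
  simpa using C.mul_Pd_mem F hF n (C.ρ_mem x) m

lemma CycleOver.d_mul_Pd (C : CycleOver k A Ω) (F : ℕ → Ω) (hF : ∀ i, F i ∈ C.G 1)
    (hd : ∀ i, C.d (F i) = 0) :
    ∀ (n : ℕ) {x : Ω} (_ : x ∈ C.G 0) (m : ℕ), C.d (x * Pd F m n) = C.d x * Pd F m n
  | 0, x, hx, m => by simp
  | n+1, x, hx, m => by
    have h1 : x * Pd F m (n+1) = (x * Pd F m n) * F (m+n) := by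
      rw [Pd_succ_right, mul_assoc]
    have hz : x * Pd F m n ∈ C.G n := by
      simpa using C.mul_Pd_mem F hF n hx m
    rw [h1, C.leibniz hz, hd, mul_zero, smul_zero, add_zero,
      C.d_mul_Pd F hF hd n hx m, Pd_succ_right, mul_assoc]


def ext {A : Type*} {n : ℕ} (a : Fin (n+1) → A) : ℕ → A :=
  fun p => a ⟨min p n, Nat.lt_succ_of_le (min_le_right p n)⟩

lemma ext_eq {A : Type*} {n : ℕ} (a : Fin (n+1) → A) (i : Fin (n+1)) :
    a i = ext a (i : ℕ) := by
  unfold ext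
  exact congrArg a (Fin.ext (by simp [Nat.lt_succ_iff.mp i.isLt, Nat.min_eq_left]))

lemma part1 (C : CycleOver k A Ω) (a : Fin (k + 1) → A) :
    C.char (fun i =>
        if (i : ℕ) = 0 then a (Fin.last k)
        else a ⟨(i : ℕ) - 1, lt_of_le_of_lt (Nat.sub_le _ _) i.isLt⟩) =
      (-1 : ℂ) ^ k * C.char a := by
  cases k with
  | zero =>
      simp [CycleOver.char, show Fin.last 0 = 0 from rfl]
  | succ m =>
      set b : ℕ → A := ext a with hbdef
      have hb : ∀ (i : Fin (m+2)), a i = b (i : ℕ) := fun i => ext_eq a i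
      set D : ℕ → Ω := fun p => C.d (C.ρ (b p)) with hD
      have hDp : ∀ p, C.d (C.ρ (b p)) = D p := fun _ => rfl
      have key : ∀ jf : Fin (m+2), C.d (C.ρ (a jf)) = D (jf : ℕ) := fun jf => by
        rw [hb jf]
      have hD1 : ∀ i, D i ∈ C.G 1 := fun i => by
        simpa using C.d_mem (C.ρ_mem (b i))
      have hDd : ∀ i, C.d (D i) = 0 := fun i => C.d_sq _
      have hcharA : C.char a = C.intg ((C.ρ (b 0) * Pd D 1 m) * D (m+1)) := by
        rw [CycleOver.char,
          ofFn_prod_eq_Pd (m+1) (fun i : Fin (m+1) => C.d (C.ρ (a i.succ))) D 1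
            (fun i => (key i.succ).trans
              (congrArg D (by show (i : ℕ) + 1 = 1 + (i : ℕ); omega))),
          Pd_succ_right, ← mul_assoc, hb 0, Nat.add_comm 1 m, Fin.val_zero]
      have hcharC :
          C.char (fun i =>
              if (i : ℕ) = 0 then a (Fin.last (m+1))
              else a ⟨(i : ℕ) - 1, lt_of_le_of_lt (Nat.sub_le _ _) i.isLt⟩) =
            C.intg (C.ρ (b (m+1)) * (D 0 * Pd D 1 m)) := by
        rw [CycleOver.char,
          ofFn_prod_eq_Pd (m+1) _ D 0
            (fun i => by
              show C.d (C.ρ (if ((i.succ : Fin (m+2)) : ℕ) = 0 then _ else _)) = _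
              rw [if_neg (by simp [Fin.val_succ])]
              exact (key _).trans
                (congrArg D (by show (i : ℕ) + 1 - 1 = 0 + (i : ℕ); omega))),
          ← Pd_succ]
        rw [if_pos (show ((0 : Fin (m+2)) : ℕ) = 0 from rfl), hb (Fin.last (m+1)),
          Fin.val_last]
      set ω : Ω := C.ρ (b 0) * Pd D 1 m with hω
      have hωmem : ω ∈ C.G m := C.Pd_mem' D hD1 m 1
      have hdω : C.d ω = D 0 * Pd D 1 m := by
        rw [hω, C.d_mul_Pd D hD1 hDd m (C.ρ_mem _) 1, hDp]
      have hmem2 : C.ρ (b (m+1)) * ω ∈ C.G (m + 1 - 1) := by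
        have := C.mul_mem (C.ρ_mem (b (m+1))) hωmem
        simpa using this
      have h0 := C.closed hmem2
      rw [C.leibniz0 (C.ρ_mem _) ω, map_add, hdω, hDp] at h0
      have htr : C.intg (D (m+1) * ω) = (-1 : ℂ)^m * C.intg (ω * D (m+1)) := by
        have := C.trace (j := 1) (by omega) (hD1 (m+1))
          (show ω ∈ C.G (m + 1 - 1) by simpa using hωmem)
        simpa using this
      rw [hcharC, hcharA]
      linear_combination h0 - htr

lemma part2 (C : CycleOver k A Ω) (a : Fin (k + 2) → A) :
    (∑ j : Fin (k + 1),
        (-1 : ℂ) ^ (j : ℕ) *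
          C.char (fun i =>
              if (i : ℕ) < (j : ℕ) then a i.castSucc
              else if (i : ℕ) = (j : ℕ) then a i.castSucc * a i.succ
              else a i.succ)) +
      (-1 : ℂ) ^ (k + 1) *
        C.char (fun i =>
            if (i : ℕ) = 0 then a (Fin.last (k + 1)) * a 0
            else a i.castSucc) = 0 := by
  set b : ℕ → A := ext a with hbdef
  have hb : ∀ i : Fin (k+2), a i = b (i : ℕ) := fun i => ext_eq a i
  set D : ℕ → Ω := fun p => C.d (C.ρ (b p)) with hD
  have hDp : ∀ p, C.d (C.ρ (b p)) = D p := fun _ => rfl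
  have hD1 : ∀ i, D i ∈ C.G 1 := fun i => by
    simpa using C.d_mem (C.ρ_mem (b i))
  set Z : ℕ → ℂ :=
    fun i => C.intg (C.ρ (b 0) * Pd D 1 i * C.ρ (b (i+1)) * Pd D (i+2) (k-i)) with hZ
  set g : ℕ → ℂ := fun jv => (-1 : ℂ)^jv *
      C.char (fun i : Fin (k+1) =>
        if (i : ℕ) < jv then a i.castSucc
        else if (i : ℕ) = jv then a i.castSucc * a i.succ
        else a i.succ) with hg
  -- the j-th term for j = 0
  have hg0 : g 0 = Z 0 := by
    show (-1 : ℂ)^0 * C.char _ = Z 0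
    rw [pow_zero, one_mul, CycleOver.char,
      ofFn_prod_eq_Pd k _ (fun p => D (p+2)) 0 (fun t => by
        simp only [Fin.val_succ, Nat.zero_add]
        rw [if_neg (by omega), if_neg (by omega), hb t.succ.succ]
        simp only [Fin.val_succ]
        exact (hDp _).trans (congrArg D (by omega))),
      Pd_congr (fun p => D (p+2)) D k 0 2 (fun t ht => by
        exact congrArg D (by omega))]
    show C.intg (C.ρ (if _ then _ else if ((0 : Fin (k+1)) : ℕ) = 0 then
        a (0 : Fin (k+1)).castSucc * a (0 : Fin (k+1)).succ else _) * _) = _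
    rw [if_neg (by omega), if_pos (by simp),
      hb (0 : Fin (k+1)).castSucc, hb (0 : Fin (k+1)).succ]
    simp only [Fin.coe_castSucc, Fin.val_zero, Fin.val_succ, Nat.zero_add]
    rw [hZ]
    simp only [Pd_zero, mul_one, Nat.sub_zero, C.ρ_mul]
  -- the j-th term for j = i+1, i < k
  have hgs : ∀ i, i < k →
      g (i+1) = (-1 : ℂ)^(i+1) * Z (i+1) - (-1 : ℂ)^i * Z i := by
    intro i hik
    set Mi : Ω := C.d (C.ρ (b (i+1) * b (i+2))) with hMi
    set F : ℕ → Ω := fun p =>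
      if p+1 < i+1 then D (p+1) else if p+1 = i+1 then Mi else D (p+2) with hF
    have hFp : ∀ p, F p =
        if p+1 < i+1 then D (p+1) else if p+1 = i+1 then Mi else D (p+2) :=
      fun _ => rfl
    have hchar : C.char (fun t : Fin (k+1) =>
        if (t : ℕ) < i+1 then a t.castSucc
        else if (t : ℕ) = i+1 then a t.castSucc * a t.succ
        else a t.succ) = C.intg (C.ρ (b 0) * Pd F 0 k) := by
      rw [CycleOver.char,
        ofFn_prod_eq_Pd k _ F 0 (fun t => by
          simp only [Fin.val_succ, Nat.zero_add]
          rw [hFp]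
          by_cases h1 : (t : ℕ) + 1 < i + 1
          · rw [if_pos h1, if_pos h1, hb t.succ.castSucc]
            simp only [Fin.coe_castSucc, Fin.val_succ]
            exact (hDp _).trans (congrArg D (by omega))
          · by_cases h2 : (t : ℕ) + 1 = i + 1
            · rw [if_neg h1, if_pos h2, if_neg h1, if_pos h2,
                hb t.succ.castSucc, hb t.succ.succ]
              simp only [Fin.coe_castSucc, Fin.val_succ]
              rw [show (t : ℕ) + 1 = i + 1 from h2]
            · rw [if_neg h1, if_neg h2, if_neg h1, if_neg h2, hb t.succ.succ]
              simp only [Fin.val_succ]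
              exact (hDp _).trans (congrArg D (by omega)))]
      rw [if_pos (show ((0 : Fin (k+1)) : ℕ) < i + 1 by simp),
        hb (Fin.castSucc (0 : Fin (k+1)))]
      norm_num
    have e1 : Pd F 0 k = Pd D 1 i * (Mi * Pd D (i+3) (k-(i+1))) := by
      have e0 : k = i + (1 + (k - (i+1))) := by omega
      calc Pd F 0 k = Pd F 0 (i + (1 + (k-(i+1)))) := by rw [← e0]
        _ = Pd F 0 i * Pd F (0+i) (1 + (k-(i+1))) := Pd_add F 0 i _
        _ = Pd F 0 i * (F (0+i) * Pd F (0+i+1) (k-(i+1))) := by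
            rw [Nat.add_comm 1 (k-(i+1)), Pd_succ]
        _ = Pd D 1 i * (Mi * Pd D (i+3) (k-(i+1))) := by
            rw [Pd_congr F D i 0 1 (fun t ht => by
                rw [hFp, if_pos (by omega)]
                exact congrArg D (by omega)),
              show F (0+i) = Mi from by rw [hFp, if_neg (by omega), if_pos (by omega)],
              Pd_congr F D (k-(i+1)) (0+i+1) (i+3) (fun t ht => by
                rw [hFp, if_neg (by omega), if_neg (by omega)]
                exact congrArg D (by omega))]
    have hMeq : Mi = D (i+1) * C.ρ (b (i+2)) + C.ρ (b (i+1)) * D (i+2) := by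
      rw [hMi, C.ρ_mul, C.leibniz0 (C.ρ_mem _)]
    have hZs : Z (i+1) = C.intg (C.ρ (b 0) * Pd D 1 (i+1) * C.ρ (b (i+2)) *
        Pd D (i+3) (k-(i+1))) := rfl
    have hZi : Z i = C.intg (C.ρ (b 0) * Pd D 1 i * C.ρ (b (i+1)) *
        (D (i+2) * Pd D (i+3) (k-(i+1)))) := by
      show C.intg (C.ρ (b 0) * Pd D 1 i * C.ρ (b (i+1)) * Pd D (i+2) (k-i)) = _
      rw [show k - i = (k - (i+1)) + 1 from by omega, Pd_succ]
    have hPd1 : Pd D 1 (i+1) = Pd D 1 i * D (i+1) := by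
      rw [Pd_succ_right]
      exact congrArg (fun t => Pd D 1 i * D t) (by omega)
    have main : C.ρ (b 0) * Pd F 0 k =
        (C.ρ (b 0) * Pd D 1 (i+1) * C.ρ (b (i+2)) * Pd D (i+3) (k-(i+1)))
        + (C.ρ (b 0) * Pd D 1 i * C.ρ (b (i+1)) *
            (D (i+2) * Pd D (i+3) (k-(i+1)))) := by
      rw [e1, hMeq, hPd1]
      noncomm_ring
    show (-1 : ℂ)^(i+1) * C.char _ = _
    rw [hchar, main, map_add, ← hZs, ← hZi]
    ring
  -- the last (cyclic) term
  have hlast : C.char (fun i : Fin (k+1) =>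
      if (i : ℕ) = 0 then a (Fin.last (k+1)) * a 0 else a i.castSucc) = Z k := by
    rw [CycleOver.char,
      ofFn_prod_eq_Pd k _ D 1 (fun t => by
        simp only [Fin.val_succ]
        rw [if_neg (by omega), hb t.succ.castSucc]
        simp only [Fin.coe_castSucc, Fin.val_succ]
        exact (hDp _).trans (congrArg D (by omega))),
      if_pos (show ((0 : Fin (k+1)) : ℕ) = 0 by simp),
      hb (Fin.last (k+1)), hb (0 : Fin (k+2)), Fin.val_last, Fin.val_zero,
      C.ρ_mul, mul_assoc]
    have htr := C.trace (j := 0) (Nat.zero_le k) (C.ρ_mem (b (k+1)))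
      (show C.ρ (b 0) * Pd D 1 k ∈ C.G (k - 0) from C.Pd_mem' D hD1 k 1)
    rw [htr]
    simp only [Nat.zero_mul, pow_zero, one_mul]
    rw [show Z k = C.intg (C.ρ (b 0) * Pd D 1 k * C.ρ (b (k+1)) *
        Pd D (k+2) (k-k)) from rfl, Nat.sub_self, Pd_zero, mul_one]
  -- assembling
  have hS : (∑ j : Fin (k + 1),
      (-1 : ℂ) ^ (j : ℕ) *
        C.char (fun i =>
            if (i : ℕ) < (j : ℕ) then a i.castSucc
            else if (i : ℕ) = (j : ℕ) then a i.castSucc * a i.succ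
            else a i.succ)) = (-1 : ℂ)^k * Z k := by
    calc (∑ j : Fin (k + 1),
        (-1 : ℂ) ^ (j : ℕ) *
          C.char (fun i =>
              if (i : ℕ) < (j : ℕ) then a i.castSucc
              else if (i : ℕ) = (j : ℕ) then a i.castSucc * a i.succ
              else a i.succ)) = ∑ j : Fin (k+1), g (j : ℕ) :=
          Finset.sum_congr rfl (fun j _ => rfl)
      _ = ∑ jv ∈ Finset.range (k+1), g jv := Fin.sum_univ_eq_sum_range g (k+1)
      _ = (∑ x ∈ Finset.range k, g (x+1)) + g 0 := Finset.sum_range_succ' g k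
      _ = (((-1 : ℂ)^k * Z k) - ((-1 : ℂ)^0 * Z 0)) + Z 0 := by
          rw [hg0, Finset.sum_congr rfl
              (fun x hx => hgs x (Finset.mem_range.mp hx)),
            Finset.sum_range_sub (fun p => (-1 : ℂ)^p * Z p) k]
      _ = (-1 : ℂ)^k * Z k := by ring
  rw [hS, hlast]
  ring


/-- the character of a `k`-cycle is a cyclic `k`-cocycle:
`τ(aᵏ, a⁰,…,aᵏ⁻¹) = (−1)ᵏ τ(a⁰,…,aᵏ)` and `bτ = 0`. -/
theorem stmt13 (C : CycleOver k A Ω) :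
    (∀ a : Fin (k + 1) → A,
      C.char (fun i =>
          if (i : ℕ) = 0 then a (Fin.last k)
          else a ⟨(i : ℕ) - 1, lt_of_le_of_lt (Nat.sub_le _ _) i.isLt⟩) =
        (-1 : ℂ) ^ k * C.char a)
    ∧ (∀ a : Fin (k + 2) → A,
      (∑ j : Fin (k + 1),
          (-1 : ℂ) ^ (j : ℕ) *
            C.char (fun i =>
                if (i : ℕ) < (j : ℕ) then a i.castSucc
                else if (i : ℕ) = (j : ℕ) then a i.castSucc * a i.succ
                else a i.succ)) +
        (-1 : ℂ) ^ (k + 1) *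
          C.char (fun i =>
              if (i : ℕ) = 0 then a (Fin.last (k + 1)) * a 0
              else a i.castSucc) = 0) := by
  exact ⟨fun a => part1 C a, fun a => part2 C a⟩

end

end CyclicCohomology
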